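/- For every integer n ≥ 1, the number of pairs (T, r), where T is a simple graph on the vertex set Fin n that is a tree (connected and acyclic) and r ∈ Fin n is a distinguished root vertex, equals n^{n−1}. That is, the number of labelled rooted trees on n vertices is n^{n−1}. -/

import Mathlib

namespace Cayley
variable {n : ℕ}

/-- `f` is the parent function of a rooted tree with root `r`. -/
def IsTreeFun (f : Fin n → Fin n) (r : Fin n) : Prop :=
  f r = r ∧ ∀ v, ∃ k, f^[k] v = r

namespace IsTreeFun
variable {f : Fin n → Fin n} {r : Fin n} (h : IsTreeFun f r)
include h

/-- distance to the root -/
noncomputable def d (v : Fin n) : ℕ := Nat.find (h.2 v)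

lemma iter_d (v) : f^[h.d v] v = r := Nat.find_spec (h.2 v)

lemma d_eq_zero : h.d r = 0 := by
  simpa [d] using Nat.find_eq_zero (h.2 r) |>.2 rfl

lemma d_pos {v} (hv : v ≠ r) : 0 < h.d v := by
  rcases Nat.eq_zero_or_pos (h.d v) with h0 | h0
  · exact absurd (by simpa [h0] using h.iter_d v) hv
  · exact h0

lemma d_apply {v} (hv : v ≠ r) : h.d (f v) + 1 = h.d v := by
  have h1 : h.d (f v) ≤ h.d v - 1 := by
    apply Nat.find_le
    have := h.iter_d v
    rwa [← Nat.succ_pred_eq_of_pos (h.d_pos hv), Function.iterate_succ_apply] at this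
  have h2 : h.d v ≤ h.d (f v) + 1 := by
    apply Nat.find_le
    rw [Function.iterate_succ_apply]
    exact h.iter_d (f v)
  have h3 := h.d_pos hv
  omega

lemma fix_eq_root {v} (hv : f v = v) : v = r := by
  have : ∀ k, f^[k] v = v := by
    intro k; induction k with
    | zero => rfl
    | succ k ih => rw [Function.iterate_succ_apply, hv, ih]
  rw [← iter_d h v, this]

lemma apply_ne {v} (hv : v ≠ r) : f v ≠ v := fun hc => hv (fix_eq_root h hc)

end IsTreeFun

/-- The simple graph of a parent function. -/
def tGraph (f : Fin n → Fin n) : SimpleGraph (Fin n) :=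
  SimpleGraph.fromRel (fun a b => f a = b)

lemma tGraph_adj {f : Fin n → Fin n} {a b : Fin n} :
    (tGraph f).Adj a b ↔ a ≠ b ∧ (f a = b ∨ f b = a) := by
  simp [tGraph]

section
variable {f : Fin n → Fin n} {r : Fin n}

lemma reachable_root (h : IsTreeFun f r) (v : Fin n) : (tGraph f).Reachable v r := by
  obtain ⟨k, hk⟩ := h.2 v
  induction k generalizing v with
  | zero => exact hk ▸ SimpleGraph.Reachable.refl v
  | succ k ih =>
    by_cases hv : f v = v
    · exact ih v (by rw [← hk, Function.iterate_succ_apply, hv])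
    · exact SimpleGraph.Reachable.trans
        (SimpleGraph.Adj.reachable (tGraph_adj.2 ⟨(Ne.symm hv), Or.inl rfl⟩))
        (ih (f v) (by rwa [Function.iterate_succ_apply] at hk))

lemma adj_cases (h : IsTreeFun f r) {a b : Fin n} (hab : (tGraph f).Adj a b) :
    b = f a ∨ h.d a < h.d b := by
  rcases tGraph_adj.1 hab with ⟨hne, hfa | hfb⟩
  · exact Or.inl hfa.symm
  · right
    have hbr : b ≠ r := by
      rintro rfl
      exact hne (by rw [← hfb, h.1])
    have := h.d_apply hbr
    rw [hfb] at this
    omega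

lemma first_edge_mem {G : SimpleGraph (Fin n)} {u v : Fin n} (p : G.Walk u v) (hp : ¬ p.Nil) :
    s(u, p.getVert 1) ∈ p.edges := by
  cases p with
  | nil => simp at hp
  | cons h q => simp

lemma isAcyclic_tGraph (h : IsTreeFun f r) : (tGraph f).IsAcyclic := by
  intro v c hc
  obtain ⟨x, hxs, hmax⟩ := Finset.exists_max_image c.support.toFinset (h.d)
    ⟨v, by simp [SimpleGraph.Walk.start_mem_support]⟩
  rw [List.mem_toFinset] at hxs
  set c' := c.rotate x hxs with hc'def
  have hc' : c'.IsCycle := hc.rotate hxs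
  have hsupp : ∀ w, w ∈ c'.support → w ∈ c.support := by
    intro w hw
    rw [SimpleGraph.Walk.support_eq_cons] at hw
    rcases List.mem_cons.1 hw with rfl | hw
    · exact hxs
    · have := (SimpleGraph.Walk.support_rotate c (u := x) hxs).mem_iff.1 hw
      rw [SimpleGraph.Walk.support_eq_cons c] at *
      exact List.mem_cons_of_mem _ this
  have hnil : ¬ c'.Nil := hc'.not_nil
  -- first neighbor
  set y := c'.getVert 1 with hy
  have hadjy : (tGraph f).Adj x y := c'.adj_snd hnil
  have hymem : y ∈ c'.support :=
    SimpleGraph.Walk.mem_support_iff_exists_getVert.2 ⟨1, rfl, by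
      have := SimpleGraph.Walk.not_nil_iff_lt_length.1 hnil; omega⟩
  -- last neighbor
  set z := c'.reverse.getVert 1 with hz
  have hnilr : ¬ c'.reverse.Nil := by
    rw [SimpleGraph.Walk.nil_iff_length_eq, SimpleGraph.Walk.length_reverse]
    have := SimpleGraph.Walk.not_nil_iff_lt_length.1 hnil; omega
  have hadjz : (tGraph f).Adj x z := c'.reverse.adj_snd hnilr
  have hzmem : z ∈ c'.support := by
    have : z ∈ c'.reverse.support :=
      SimpleGraph.Walk.mem_support_iff_exists_getVert.2 ⟨1, rfl, by
        have := SimpleGraph.Walk.not_nil_iff_lt_length.1 hnilr; omega⟩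
    rwa [SimpleGraph.Walk.support_reverse, List.mem_reverse] at this
  -- y ≠ z
  have hyz : y ≠ z := by
    intro hyzeq
    obtain ⟨w1, hadj, q, hcc⟩ : ∃ (w1 : Fin n) (hadj : (tGraph f).Adj x w1)
        (q : (tGraph f).Walk w1 x), c' = SimpleGraph.Walk.cons hadj q := by
      cases hcx : c' with
      | nil => rw [hcx] at hnil; simp at hnil
      | cons hadj q => exact ⟨_, hadj, q, rfl⟩
    have hq : q.IsPath ∧ s(x, w1) ∉ q.edges := (SimpleGraph.Walk.cons_isCycle_iff q hadj).1 (hcc ▸ hc')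
    have hqnil : ¬ q.Nil := by
      rw [SimpleGraph.Walk.nil_iff_length_eq]
      have h3 := hc'.three_le_length
      rw [hcc] at h3; simp at h3; omega
    have hzq : z = q.reverse.getVert 1 := by
      rw [hz, hcc, SimpleGraph.Walk.reverse_cons, SimpleGraph.Walk.getVert_append]
      have : 1 < q.reverse.length := by
        rw [SimpleGraph.Walk.length_reverse]
        have h3 := hc'.three_le_length
        rw [hcc] at h3; simp at h3; omega
      rw [if_pos this]
    have hedge : s(x, z) ∈ q.edges := by
      have := first_edge_mem q.reverse (by
        rw [SimpleGraph.Walk.nil_iff_length_eq, SimpleGraph.Walk.length_reverse]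
        exact fun h0 => hqnil (SimpleGraph.Walk.nil_iff_length_eq.2 h0))
      rw [← hzq] at this
      rwa [SimpleGraph.Walk.edges_reverse, List.mem_reverse] at this
    have hy1 : y = w1 := by rw [hy, hcc, SimpleGraph.Walk.getVert_cons_succ, SimpleGraph.Walk.getVert_zero]
    rw [← hyzeq, hy1] at hedge
    exact hq.2 hedge
  -- both neighbors have smaller-or-equal depth, so both = f x
  have hyfx : y = f x := by
    rcases adj_cases h hadjy with h1 | h1
    · exact h1
    · exact absurd (hmax y (List.mem_toFinset.2 (hsupp y hymem))) (by omega)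
  have hzfx : z = f x := by
    rcases adj_cases h hadjz with h1 | h1
    · exact h1
    · exact absurd (hmax z (List.mem_toFinset.2 (hsupp z hzmem))) (by omega)
  exact hyz (hyfx.trans hzfx.symm)

end
lemma isTree_tGraph {f : Fin n → Fin n} {r : Fin n} (h : IsTreeFun f r) : (tGraph f).IsTree := by
  have : Nonempty (Fin n) := ⟨r⟩
  exact ⟨SimpleGraph.Connected.mk
    (fun a b => (reachable_root h a).trans (reachable_root h b).symm),
    isAcyclic_tGraph h⟩

section
variable {G : SimpleGraph (Fin n)} (hT : G.IsTree) (r : Fin n)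

/-- the canonical path to the root -/
noncomputable def pth (v : Fin n) : G.Walk v r := (hT.existsUnique_path v r).choose

lemma pth_isPath (v : Fin n) : (pth hT r v).IsPath := (hT.existsUnique_path v r).choose_spec.1

lemma pth_unique {v : Fin n} (p : G.Walk v r) (hp : p.IsPath) : p = pth hT r v :=
  (hT.existsUnique_path v r).choose_spec.2 p hp

/-- the parent of a vertex in a rooted tree -/
noncomputable def parent (v : Fin n) : Fin n := (pth hT r v).getVert 1

lemma pth_root : pth hT r r = SimpleGraph.Walk.nil :=
  (pth_unique hT r SimpleGraph.Walk.nil (SimpleGraph.Walk.IsPath.nil)).symm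

lemma parent_root : parent hT r r = r := by
  rw [parent, pth_root]
  rfl

lemma pth_not_nil {v : Fin n} (hv : v ≠ r) : ¬ (pth hT r v).Nil := by
  intro hnil
  rw [SimpleGraph.Walk.nil_iff_support_eq] at hnil
  have := SimpleGraph.Walk.end_mem_support (pth hT r v)
  rw [hnil] at this
  simp at this
  exact hv this.symm

lemma adj_parent {v : Fin n} (hv : v ≠ r) : G.Adj v (parent hT r v) :=
  (pth hT r v).adj_snd (pth_not_nil hT r hv)

lemma pth_parent_eq_tail {v : Fin n} (hv : v ≠ r) :
    pth hT r (parent hT r v) = (pth hT r v).tail := by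
  refine (pth_unique hT r _ ?_).symm
  exact (pth_isPath hT r v).tail

lemma length_pth_parent {v : Fin n} (hv : v ≠ r) :
    (pth hT r (parent hT r v)).length + 1 = (pth hT r v).length := by
  rw [pth_parent_eq_tail hT r hv]
  exact SimpleGraph.Walk.length_tail_add_one (pth_not_nil hT r hv)

lemma parent_isTreeFun : IsTreeFun (parent hT r) r := by
  constructor
  · exact parent_root hT r
  · intro v
    generalize hl : (pth hT r v).length = L
    induction L using Nat.strong_induction_on generalizing v with
    | _ L ih =>
      by_cases hv : v = r
      · exact ⟨0, hv⟩
      · have hlen := length_pth_parent hT r hv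
        obtain ⟨k, hk⟩ := ih (pth hT r (parent hT r v)).length (by omega) (parent hT r v) rfl
        exact ⟨k + 1, by rwa [Function.iterate_succ_apply]⟩

lemma parent_or (hT : G.IsTree) (r : Fin n) {a b : Fin n} (hab : G.Adj a b) :
    parent hT r a = b ∨ parent hT r b = a := by
  by_cases hmem : a ∈ (pth hT r b).support
  · right
    -- path from b to r passes through a; b ∉ dropUntil; cons b-a dropUntil is the path from b
    set q := (pth hT r b).dropUntil a hmem with hq
    have hqp : q.IsPath := (pth_isPath hT r b).dropUntil hmem
    have hbq : b ∉ q.support := by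
      intro hbq
      rw [SimpleGraph.Walk.support_eq_cons] at hbq
      rcases List.mem_cons.1 hbq with h1 | h1
      · exact hab.ne h1.symm
      · have hnd := (pth_isPath hT r b).support_nodup
        rw [← SimpleGraph.Walk.take_spec (pth hT r b) hmem,
          SimpleGraph.Walk.support_append, List.nodup_append] at hnd
        exact hnd.2.2 _ (SimpleGraph.Walk.start_mem_support _) _ h1 rfl
    have : SimpleGraph.Walk.cons hab.symm q = pth hT r b :=
      pth_unique hT r _ (hqp.cons hbq)
    rw [parent, ← this, SimpleGraph.Walk.getVert_cons_succ, SimpleGraph.Walk.getVert_zero]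
  · left
    have : SimpleGraph.Walk.cons hab (pth hT r b) = pth hT r a :=
      pth_unique hT r _ ((pth_isPath hT r b).cons hmem)
    rw [parent, ← this, SimpleGraph.Walk.getVert_cons_succ, SimpleGraph.Walk.getVert_zero]

lemma adj_iff_parent (hT : G.IsTree) (r : Fin n) {a b : Fin n} :
    G.Adj a b ↔ a ≠ b ∧ (parent hT r a = b ∨ parent hT r b = a) := by
  constructor
  · exact fun hab => ⟨hab.ne, parent_or hT r hab⟩
  · rintro ⟨hne, h1 | h1⟩
    · have ha : a ≠ r := by
        rintro rfl
        rw [parent_root] at h1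
        exact hne h1
      exact h1 ▸ adj_parent hT r ha
    · have hb : b ≠ r := by
        rintro rfl
        rw [parent_root] at h1
        exact hne h1.symm
      exact (h1 ▸ adj_parent hT r hb).symm

lemma tGraph_parent : tGraph (parent hT r) = G := by
  ext a b
  rw [tGraph_adj, adj_iff_parent hT r]

end

section
variable {f : Fin n → Fin n} {r : Fin n}

lemma periodic_eq_root (h : IsTreeFun f r) {v : Fin n} {j : ℕ} (hj : 0 < j)
    (hper : f^[j] v = v) : v = r := by
  obtain ⟨k, hk⟩ := h.2 v
  have hmul : ∀ m, f^[j * m] v = v := by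
    intro m
    induction m with
    | zero => rfl
    | succ m ih => rw [Nat.mul_succ, Function.iterate_add_apply, hper, ih]
  have hge : f^[j * k] v = r := by
    have : j * k = (j * k - k) + k := by have := Nat.le_mul_of_pos_left k hj; omega
    rw [this, Function.iterate_add_apply, hk, Function.iterate_fixed h.1]
  rw [← hmul k, hge]

/-- descent walk from `v` to the root -/
def wkAux (h : IsTreeFun f r) : (k : ℕ) → (v : Fin n) → f^[k] v = r → (tGraph f).Walk v r
  | 0, _, hk => SimpleGraph.Walk.nil.copy (show r = _ from hk.symm) rfl
  | k + 1, v, hk =>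
    if hv : v = r then SimpleGraph.Walk.nil.copy hv.symm rfl
    else SimpleGraph.Walk.cons
      (tGraph_adj.2 ⟨(h.apply_ne hv).symm, Or.inl rfl⟩)
      (wkAux h k (f v) (by rwa [Function.iterate_succ_apply] at hk))

lemma wkAux_support (h : IsTreeFun f r) (k : ℕ) (v : Fin n) (hk : f^[k] v = r) :
    ∀ w ∈ (wkAux h k v hk).support, ∃ j, f^[j] v = w := by
  induction k generalizing v with
  | zero =>
    intro w hw
    simp [wkAux] at hw
    exact ⟨0, by rw [hw]; exact hk⟩
  | succ k ih =>
    intro w hw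
    rw [wkAux] at hw
    split_ifs at hw with hv
    · simp at hw; exact ⟨0, by simp [hw, hv]⟩
    · rw [SimpleGraph.Walk.support_cons] at hw
      rcases List.mem_cons.1 hw with rfl | hw
      · exact ⟨0, rfl⟩
      · obtain ⟨j, hj⟩ := ih (f v) _ w hw
        exact ⟨j + 1, by rwa [Function.iterate_succ_apply]⟩

lemma wkAux_isPath (h : IsTreeFun f r) (k : ℕ) (v : Fin n) (hk : f^[k] v = r) :
    (wkAux h k v hk).IsPath := by
  induction k generalizing v with
  | zero => simp [wkAux]
  | succ k ih =>
    rw [wkAux]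
    split_ifs with hv
    · simp
    · rw [SimpleGraph.Walk.cons_isPath_iff]
      refine ⟨ih _ _, fun hmem => ?_⟩
      obtain ⟨j, hj⟩ := wkAux_support h k (f v) _ v hmem
      rw [← Function.iterate_succ_apply] at hj
      exact hv (periodic_eq_root h (Nat.succ_pos j) hj)

lemma parent_tGraph (h : IsTreeFun f r) : parent (isTree_tGraph h) r = f := by
  funext v
  by_cases hv : v = r
  · rw [hv, parent_root, h.1]
  · obtain ⟨k, hk⟩ := h.2 v
    have hk0 : k ≠ 0 := by rintro rfl; exact hv hk
    obtain ⟨k, rfl⟩ := Nat.exists_eq_succ_of_ne_zero hk0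
    have := pth_unique (isTree_tGraph h) r (wkAux h (k+1) v hk) (wkAux_isPath h (k+1) v hk)
    rw [parent, ← this, wkAux, dif_neg hv, SimpleGraph.Walk.getVert_cons_succ, SimpleGraph.Walk.getVert_zero]

end
noncomputable def equiv1 (n : ℕ) :
    {p : SimpleGraph (Fin n) × Fin n // p.1.IsTree} ≃
      {q : (Fin n → Fin n) × Fin n // IsTreeFun q.1 q.2} where
  toFun := fun ⟨(G, r), hT⟩ => ⟨(parent hT r, r), parent_isTreeFun hT r⟩
  invFun := fun ⟨(f, r), h⟩ => ⟨(tGraph f, r), isTree_tGraph h⟩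
  left_inv := fun ⟨(G, r), hT⟩ => Subtype.ext (Prod.ext (tGraph_parent hT r) rfl)
  right_inv := fun ⟨(f, r), h⟩ => Subtype.ext (Prod.ext (parent_tGraph h) rfl)

lemma exists_lt_iterate_eq (g : Fin n → Fin n) (v : Fin n) :
    ∃ i j, i < j ∧ j ≤ n ∧ g^[i] v = g^[j] v := by
  obtain ⟨a, b, hab, heq⟩ := Fintype.exists_ne_map_eq_of_card_lt
    (fun i : Fin (n+1) => g^[(i:ℕ)] v) (by simp)
  rcases Nat.lt_or_ge (a : ℕ) (b : ℕ) with hlt | hge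
  · exact ⟨a, b, hlt, by omega, heq⟩
  · have : (b:ℕ) < (a:ℕ) := by
      rcases Nat.lt_or_ge (b:ℕ) (a:ℕ) with h1 | h1
      · exact h1
      · exact absurd (Fin.ext (by omega)) hab
    exact ⟨b, a, this, by omega, heq.symm⟩

lemma iterate_factorial_fixed {g : Fin n → Fin n} {x : Fin n} {p : ℕ} (hp1 : 0 < p)
    (hpn : p ≤ n) (hx : g^[p] x = x) : g^[Nat.factorial n] x = x := by
  obtain ⟨m, hm⟩ := Nat.dvd_factorial hp1 hpn
  rw [hm, Function.iterate_mul]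
  exact Function.iterate_fixed hx m

lemma exists_iterate_periodic (g : Fin n → Fin n) (v : Fin n) :
    ∃ k, g^[Nat.factorial n] (g^[k] v) = g^[k] v := by
  obtain ⟨i, j, hij, hjn, heq⟩ := exists_lt_iterate_eq g v
  refine ⟨i, iterate_factorial_fixed (p := j - i) (by omega) (by omega) ?_⟩
  rw [← Function.iterate_add_apply]
  rw [show j - i + i = j by omega]
  exact heq.symm

section invariant
variable {g : Fin n → Fin n} {S : Finset (Fin n)}
  (hmap : ∀ v ∈ S, g v ∈ S) (hinj : Set.InjOn g S)

include hmap in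
lemma iter_mem (k : ℕ) {v : Fin n} (hv : v ∈ S) : g^[k] v ∈ S := by
  induction k generalizing v with
  | zero => exact hv
  | succ k ih => rw [Function.iterate_succ_apply]; exact ih (hmap v hv)

include hmap hinj in
lemma iter_cancel (k : ℕ) {a b : Fin n} (ha : a ∈ S) (hb : b ∈ S)
    (heq : g^[k] a = g^[k] b) : a = b := by
  induction k generalizing a b with
  | zero => exact heq
  | succ k ih =>
    rw [Function.iterate_succ_apply, Function.iterate_succ_apply] at heq
    exact hinj ha hb (ih (hmap a ha) (hmap b hb) heq)

include hmap hinj in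
lemma periodic_of_invariant {v : Fin n} (hv : v ∈ S) : g^[Nat.factorial n] v = v := by
  obtain ⟨i, j, hij, hjn, heq⟩ := exists_lt_iterate_eq g v
  have hper : g^[j - i] v = v := by
    refine iter_cancel hmap hinj i (iter_mem hmap _ hv) hv ?_
    rw [← Function.iterate_add_apply]
    rw [show i + (j - i) = j by omega]
    exact heq.symm
  exact iterate_factorial_fixed (by omega) (by omega) hper

end invariant

/-- If `g'` agrees with `g` off `S`, then orbits of `g'` enter `S` whenever orbits of `g` do. -/
lemma exists_iter_mem_of_agree {g g' : Fin n → Fin n} {S : Finset (Fin n)}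
    (hagree : ∀ v, v ∉ S → g' v = g v) :
    ∀ (k : ℕ) (v : Fin n), g^[k] v ∈ S → ∃ j, g'^[j] v ∈ S := by
  intro k
  induction k with
  | zero => exact fun v hv => ⟨0, hv⟩
  | succ k ih =>
    intro v hv
    by_cases hvS : v ∈ S
    · exact ⟨0, hvS⟩
    · rw [Function.iterate_succ_apply] at hv
      obtain ⟨j, hj⟩ := ih (g v) hv
      rw [← hagree v hvS] at hj
      exact ⟨j + 1, by rwa [Function.iterate_succ_apply]⟩

/-- cyclic vertices of `g` -/
def Zset (g : Fin n → Fin n) : Finset (Fin n) :=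
  Finset.univ.filter fun v => g^[Nat.factorial n] v = v

lemma mem_Zset {g : Fin n → Fin n} {v : Fin n} : v ∈ Zset g ↔ g^[Nat.factorial n] v = v := by
  simp [Zset]

lemma Zset_map {g : Fin n → Fin n} {v : Fin n} (hv : v ∈ Zset g) : g v ∈ Zset g := by
  rw [mem_Zset] at *
  rw [← Function.iterate_succ_apply, Function.iterate_succ_apply', hv]

lemma Zset_inj {g : Fin n → Fin n} : Set.InjOn g (Zset g) := by
  intro a ha b hb hab
  rw [Finset.mem_coe, mem_Zset] at ha hb
  have h1 : 0 < Nat.factorial n := Nat.factorial_pos n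
  have : ∀ x : Fin n, g^[Nat.factorial n] x = g^[Nat.factorial n - 1] (g x) := by
    intro x
    conv_lhs => rw [show Nat.factorial n = (Nat.factorial n - 1) + 1 by omega]
    rw [Function.iterate_succ_apply]
  rw [this] at ha hb
  rw [← ha, ← hb, hab]

lemma Zset_nonempty (hn : 0 < n) (g : Fin n → Fin n) : (Zset g).Nonempty := by
  obtain ⟨k, hk⟩ := exists_iterate_periodic g ⟨0, hn⟩
  exact ⟨g^[k] ⟨0, hn⟩, mem_Zset.2 hk⟩

lemma oif_congr {S T : Finset (Fin n)} (hST : S = T) {i : ℕ} (hiS : i < S.card)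
    (hiT : i < T.card) :
    ((S.orderIsoOfFin rfl ⟨i, hiS⟩ : S) : Fin n) = ((T.orderIsoOfFin rfl ⟨i, hiT⟩ : T) : Fin n) := by
  subst hST; rfl
section phi
variable {f : Fin n → Fin n} {r : Fin n}

/-- the path from `b` to the root, as a finset -/
noncomputable def Pset (h : IsTreeFun f r) (b : Fin n) : Finset (Fin n) :=
  (Finset.range (h.d b + 1)).image (fun k => f^[k] b)

lemma iter_inj (h : IsTreeFun f r) {b : Fin n} {i j : ℕ} (hi : i ≤ h.d b) (hj : j ≤ h.d b)
    (heq : f^[i] b = f^[j] b) : i = j := by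
  rcases Nat.lt_trichotomy i j with hlt | he | hlt
  · exfalso
    have hper : f^[j - i] (f^[i] b) = f^[i] b := by
      rw [← Function.iterate_add_apply, show j - i + i = j by omega]
      exact heq.symm
    have := periodic_eq_root h (by omega : 0 < j - i) hper
    exact Nat.find_min (h.2 b) (by omega : i < h.d b) this
  · exact he
  · exfalso
    have hper : f^[i - j] (f^[j] b) = f^[j] b := by
      rw [← Function.iterate_add_apply, show i - j + j = i by omega]
      exact heq
    have := periodic_eq_root h (by omega : 0 < i - j) hper
    exact Nat.find_min (h.2 b) (by omega : j < h.d b) this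

lemma mem_Pset (h : IsTreeFun f r) {b v : Fin n} :
    v ∈ Pset h b ↔ ∃ i, i ≤ h.d b ∧ f^[i] b = v := by
  simp [Pset, Nat.lt_succ_iff]

lemma card_Pset (h : IsTreeFun f r) (b : Fin n) : (Pset h b).card = h.d b + 1 := by
  rw [Pset, Finset.card_image_of_injOn, Finset.card_range]
  intro i hi j hj heq
  rw [Finset.mem_coe, Finset.mem_range, Nat.lt_succ_iff] at hi hj
  exact iter_inj h hi hj heq

lemma root_mem_Pset (h : IsTreeFun f r) (b : Fin n) : r ∈ Pset h b :=
  (mem_Pset h).2 ⟨h.d b, le_refl _, h.iter_d b⟩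

/-- the Joyal bijection, tree-to-function direction -/
noncomputable def phi (h : IsTreeFun f r) (b : Fin n) : Fin n → Fin n := fun v =>
  if hv : v ∈ Pset h b
  then f^[((((Pset h b).orderIsoOfFin rfl).symm ⟨v, hv⟩ : Fin (Pset h b).card) : ℕ)] b
  else f v

lemma phi_agree (h : IsTreeFun f r) {b v : Fin n} (hv : v ∉ Pset h b) : phi h b v = f v :=
  dif_neg hv

lemma phi_apply_e (h : IsTreeFun f r) (b : Fin n) (i : Fin (Pset h b).card) :
    phi h b (((Pset h b).orderIsoOfFin rfl i : ↥(Pset h b)) : Fin n) = f^[(i : ℕ)] b := by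
  have hmem := ((Pset h b).orderIsoOfFin rfl i).2
  rw [phi, dif_pos hmem, Subtype.coe_eta, OrderIso.symm_apply_apply]

lemma phi_mem (h : IsTreeFun f r) {b v : Fin n} (hv : v ∈ Pset h b) :
    phi h b v ∈ Pset h b := by
  rw [phi, dif_pos hv]
  have hlt : ((((Pset h b).orderIsoOfFin rfl).symm ⟨v, hv⟩ : Fin (Pset h b).card) : ℕ)
      < (Pset h b).card := Fin.is_lt _
  have hc := card_Pset h b
  exact (mem_Pset h).2 ⟨_, by omega, rfl⟩

lemma phi_injOn (h : IsTreeFun f r) (b : Fin n) : Set.InjOn (phi h b) (Pset h b) := by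
  intro u hu v hv heq
  rw [Finset.mem_coe] at hu hv
  simp only [phi] at heq
  rw [dif_pos hu, dif_pos hv] at heq
  have h1 : ((((Pset h b).orderIsoOfFin rfl).symm ⟨u, hu⟩ : Fin (Pset h b).card) : ℕ)
      < h.d b + 1 := by rw [← card_Pset h b]; exact Fin.is_lt _
  have h2 : ((((Pset h b).orderIsoOfFin rfl).symm ⟨v, hv⟩ : Fin (Pset h b).card) : ℕ)
      < h.d b + 1 := by rw [← card_Pset h b]; exact Fin.is_lt _
  have := iter_inj h (by omega) (by omega) heq
  have h3 : (((Pset h b).orderIsoOfFin rfl).symm ⟨u, hu⟩) = (((Pset h b).orderIsoOfFin rfl).symm ⟨v, hv⟩) :=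
    Fin.ext this
  have h4 := congrArg (((Pset h b).orderIsoOfFin rfl)) h3
  rw [OrderIso.apply_symm_apply, OrderIso.apply_symm_apply] at h4
  exact congrArg Subtype.val h4

lemma Zset_phi (h : IsTreeFun f r) (b : Fin n) : Zset (phi h b) = Pset h b := by
  apply Finset.Subset.antisymm
  · intro v hv
    rw [mem_Zset] at hv
    have hent : ∃ k, f^[k] v ∈ Pset h b := ⟨h.d v, by rw [h.iter_d]; exact root_mem_Pset h b⟩
    obtain ⟨k, hk⟩ := hent
    obtain ⟨j, hj⟩ := exists_iter_mem_of_agree (g := f) (g' := phi h b)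
      (fun w hw => phi_agree h hw) k v hk
    have hNpos := Nat.factorial_pos n
    have hfix : (phi h b)^[Nat.factorial n * (j + 1)] v = v := by
      rw [Function.iterate_mul]
      exact Function.iterate_fixed hv (j + 1)
    have hge : Nat.factorial n * (j + 1) ≥ j + 1 := Nat.le_mul_of_pos_left _ hNpos
    rw [show Nat.factorial n * (j + 1) = (Nat.factorial n * (j + 1) - j) + j by omega,
      Function.iterate_add_apply] at hfix
    rw [← hfix]
    exact iter_mem (fun w hw => phi_mem h hw) _ hj
  · intro v hv
    exact mem_Zset.2 (periodic_of_invariant (fun w hw => phi_mem h hw) (phi_injOn h b) hv)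

end phi
/-- the Joyal bijection as a map on rooted trees with a marked vertex -/
noncomputable def Phi (t : {q : (Fin n → Fin n) × Fin n // IsTreeFun q.1 q.2} × Fin n) :
    Fin n → Fin n := phi t.1.2 t.2

lemma Phi_injective : Function.Injective (Phi (n := n)) := by
  rintro ⟨⟨⟨f, r⟩, h0⟩, b⟩ ⟨⟨⟨f', r'⟩, h0'⟩, b'⟩ heq
  simp only [Phi] at heq
  have h : IsTreeFun f r := h0
  have h' : IsTreeFun f' r' := h0'
  rw [show h0 = h from rfl, show h0' = h' from rfl] at heq ⊢
  have hP : Pset h b = Pset h' b' := by rw [← Zset_phi h b, heq, Zset_phi]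
  have hc1 := card_Pset h b
  have hc2 := card_Pset h' b'
  have hcard : h.d b = h'.d b' := by rw [hP, hc2] at hc1; omega
  have key : ∀ i : ℕ, i ≤ h.d b → f^[i] b = f'^[i] b' := by
    intro i hi
    have hi1 : i < (Pset h b).card := by omega
    have hi2 : i < (Pset h' b').card := by omega
    have e1 := phi_apply_e h b ⟨i, hi1⟩
    have e2 := phi_apply_e h' b' ⟨i, hi2⟩
    rw [← e1, ← e2, heq]
    congr 1
    exact oif_congr hP hi1 hi2
  have hbb' : b = b' := by
    have := key 0 (Nat.zero_le _)
    simpa using this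
  have hrr' : r = r' := by
    have := key (h.d b) (le_refl _)
    rw [h.iter_d b, hcard, h'.iter_d b'] at this
    exact this
  have hvr_of : ∀ v, v ∈ Pset h b → f v = f' v := by
    intro v hv
    obtain ⟨i, hi, hiv⟩ := (mem_Pset h).1 hv
    rcases Nat.lt_or_ge i (h.d b) with hlt | hge
    · rw [← hiv]
      calc f (f^[i] b) = f^[i+1] b := (Function.iterate_succ_apply' f i b).symm
        _ = f'^[i+1] b' := key (i+1) (by omega)
        _ = f' (f'^[i] b') := Function.iterate_succ_apply' f' i b'
        _ = f' (f^[i] b) := by rw [key i hi]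
    · have him : i = h.d b := by omega
      have hvr : v = r := by rw [← hiv, him, h.iter_d b]
      have hvr' : v = r' := by
        rw [← hiv, him, key (h.d b) (le_refl _), hcard, h'.iter_d b']
      rw [hvr] at *
      rw [h.1, hrr', ← hvr', ← hvr]
      rw [hvr', h'.1, ← hvr']
  have hff' : f = f' := by
    funext v
    by_cases hv : v ∈ Pset h b
    · exact hvr_of v hv
    · have hv' : v ∉ Pset h' b' := by rwa [← hP]
      rw [← phi_agree h hv, heq, phi_agree h' hv']
  exact Prod.ext (Subtype.ext (Prod.ext hff' hrr')) hbb'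
section psi
variable (g : Fin n → Fin n)

noncomputable def gZperm : ↥(Zset g) ≃ ↥(Zset g) :=
  Equiv.ofBijective (fun z => ⟨g z.1, Zset_map z.2⟩)
    ((Finite.injective_iff_bijective).mp fun z z' hzz =>
      Subtype.ext (Zset_inj z.2 z'.2 (congrArg Subtype.val hzz)))

noncomputable def wE : Fin (Zset g).card ≃ ↥(Zset g) :=
  ((Zset g).orderIsoOfFin rfl).toEquiv.trans (gZperm g)

noncomputable def wv (i : Fin (Zset g).card) : Fin n := ((wE g) i : Fin n)

lemma wv_mem (i : Fin (Zset g).card) : wv g i ∈ Zset g := ((wE g) i).2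

lemma wv_inj : Function.Injective (wv g) := fun i j hij => (wE g).injective (Subtype.ext hij)

lemma wv_eq (i : Fin (Zset g).card) :
    wv g i = g (((Zset g).orderIsoOfFin rfl i : ↥(Zset g)) : Fin n) := rfl

/-- the Joyal bijection, function-to-tree direction: the parent function -/
noncomputable def psiF : Fin n → Fin n := fun v =>
  if hv : v ∈ Zset g then
    (if hi : (((wE g).symm ⟨v, hv⟩ : Fin (Zset g).card) : ℕ) + 1 < (Zset g).card
     then wv g ⟨(((wE g).symm ⟨v, hv⟩ : Fin (Zset g).card) : ℕ) + 1, hi⟩ else v)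
  else g v

lemma psiF_agree {v : Fin n} (hv : v ∉ Zset g) : psiF g v = g v := dif_neg hv

lemma psiF_w (i : Fin (Zset g).card) :
    psiF g (wv g i) =
      if hi : ((i : ℕ) + 1 < (Zset g).card) then wv g ⟨(i : ℕ) + 1, hi⟩ else wv g i := by
  rw [psiF, dif_pos (wv_mem g i)]
  have h1 : (⟨wv g i, wv_mem g i⟩ : ↥(Zset g)) = (wE g) i := Subtype.coe_eta _ _
  rw [h1, Equiv.symm_apply_apply]

variable (hn : 0 < n)
include hn

lemma card_Zset_pos : 0 < (Zset g).card := Finset.card_pos.2 (Zset_nonempty hn g)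

/-- the root -/
noncomputable def rOf : Fin n := wv g ⟨(Zset g).card - 1, by have := card_Zset_pos g hn; omega⟩

/-- the marked vertex -/
noncomputable def bOf : Fin n := wv g ⟨0, card_Zset_pos g hn⟩

lemma psiF_root : psiF g (rOf g hn) = rOf g hn := by
  rw [rOf, psiF_w]
  have := card_Zset_pos g hn
  rw [dif_neg (by simp only [Fin.val_mk]; omega)]

lemma psiF_w_to_root : ∀ (t : ℕ) (i : Fin (Zset g).card),
    (i : ℕ) + t = (Zset g).card - 1 → (psiF g)^[t] (wv g i) = rOf g hn := by
  intro t
  induction t with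
  | zero =>
    intro i hi
    simp only [Function.iterate_zero, id]
    rw [rOf]
    congr 1
    exact Fin.ext (by simp only [Fin.val_mk]; omega)
  | succ t ih =>
    intro i hi
    have hc := card_Zset_pos g hn
    have hlt : (i : ℕ) + 1 < (Zset g).card := by omega
    rw [Function.iterate_succ_apply, psiF_w, dif_pos hlt]
    exact ih ⟨(i : ℕ) + 1, hlt⟩ (by simp only [Fin.val_mk]; omega)

omit hn in
lemma psiF_enters : ∀ v : Fin n, ∃ k, (psiF g)^[k] v ∈ Zset g := by
  intro v
  obtain ⟨k0, hk0⟩ := exists_iterate_periodic g v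
  exact exists_iter_mem_of_agree (g := g) (g' := psiF g)
    (fun w hw => psiF_agree g hw) k0 v (mem_Zset.2 hk0)

lemma psiF_isTreeFun : IsTreeFun (psiF g) (rOf g hn) := by
  refine ⟨psiF_root g hn, fun v => ?_⟩
  obtain ⟨k, hk⟩ := psiF_enters g v
  set z := (psiF g)^[k] v with hz
  set i := (wE g).symm ⟨z, hk⟩ with hi
  have hwz : wv g i = z := by rw [wv, hi, Equiv.apply_symm_apply]
  refine ⟨((Zset g).card - 1 - (i : ℕ)) + k, ?_⟩
  rw [Function.iterate_add_apply, ← hz, ← hwz]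
  exact psiF_w_to_root g hn _ i (by have := Fin.is_lt i; omega)

lemma psiF_iterate (i : ℕ) (hi : i < (Zset g).card) :
    (psiF g)^[i] (bOf g hn) = wv g ⟨i, hi⟩ := by
  induction i with
  | zero => rfl
  | succ i ih =>
    have hi' : i < (Zset g).card := by omega
    rw [Function.iterate_succ_apply', ih hi', psiF_w, dif_pos hi]

lemma psiF_depth : (psiF_isTreeFun g hn).d (bOf g hn) = (Zset g).card - 1 := by
  have hc := card_Zset_pos g hn
  have hle : (psiF_isTreeFun g hn).d (bOf g hn) ≤ (Zset g).card - 1 := by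
    apply Nat.find_le
    rw [psiF_iterate g hn ((Zset g).card - 1) (by omega)]
    rw [rOf]
  have hd := (psiF_isTreeFun g hn).iter_d (bOf g hn)
  rw [psiF_iterate g hn _ (by omega)] at hd
  have := wv_inj g hd
  have := congrArg Fin.val this
  simpa using this

lemma Pset_psiF : Pset (psiF_isTreeFun g hn) (bOf g hn) = Zset g := by
  apply Finset.eq_of_subset_of_card_le
  · intro v hv
    obtain ⟨i, hile, hiv⟩ := (mem_Pset _).1 hv
    rw [psiF_depth] at hile
    have hc := card_Zset_pos g hn
    rw [psiF_iterate g hn i (by omega)] at hiv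
    rw [← hiv]
    exact wv_mem g _
  · rw [card_Pset, psiF_depth]
    have hc := card_Zset_pos g hn
    omega

lemma Phi_psiF : Phi (⟨(psiF g, rOf g hn), psiF_isTreeFun g hn⟩, bOf g hn) = g := by
  funext v
  by_cases hv : v ∈ Zset g
  · have hvP : v ∈ Pset (psiF_isTreeFun g hn) (bOf g hn) := by rw [Pset_psiF]; exact hv
    rw [Phi]
    simp only [phi]
    rw [dif_pos hvP]
    have hiP := Fin.is_lt (((Pset (psiF_isTreeFun g hn) (bOf g hn)).orderIsoOfFin rfl).symm
      ⟨v, hvP⟩)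
    have hcc : (Pset (psiF_isTreeFun g hn) (bOf g hn)).card = (Zset g).card := by
      rw [Pset_psiF]
    have hic : ((((Pset (psiF_isTreeFun g hn) (bOf g hn)).orderIsoOfFin rfl).symm
        ⟨v, hvP⟩ : Fin _) : ℕ) < (Zset g).card := by omega
    rw [psiF_iterate g hn _ hic, wv_eq]
    congr 1
    rw [oif_congr (Pset_psiF g hn).symm hic hiP, Fin.eta, OrderIso.apply_symm_apply]
  · have hvP : v ∉ Pset (psiF_isTreeFun g hn) (bOf g hn) := by rw [Pset_psiF]; exact hv
    rw [Phi]
    simp only []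
    rw [phi_agree _ hvP, psiF_agree g hv]

end psi

lemma Phi_bijective (hn : 0 < n) : Function.Bijective (Phi (n := n)) :=
  ⟨Phi_injective, fun g => ⟨(⟨(psiF g, rOf g hn), psiF_isTreeFun g hn⟩, bOf g hn), Phi_psiF g hn⟩⟩

end Cayley

/-- The number of labelled rooted trees on the vertex set `Fin n` (`n ≥ 1`), counted as
pairs `(T, r)` of a tree and a distinguished root vertex, equals `n^(n−1)`. -/
theorem card_rooted_trees (n : ℕ) (hn : 1 ≤ n) :
    Nat.card {p : SimpleGraph (Fin n) × Fin n // p.1.IsTree} = n ^ (n - 1) := by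
  have h1 : Nat.card {p : SimpleGraph (Fin n) × Fin n // p.1.IsTree}
      = Nat.card {q : (Fin n → Fin n) × Fin n // Cayley.IsTreeFun q.1 q.2} :=
    Nat.card_congr (Cayley.equiv1 n)
  have h2 : Nat.card ({q : (Fin n → Fin n) × Fin n // Cayley.IsTreeFun q.1 q.2} × Fin n)
      = Nat.card (Fin n → Fin n) :=
    Nat.card_congr (Equiv.ofBijective _ (Cayley.Phi_bijective (by omega)))
  rw [Nat.card_prod, Nat.card_eq_fintype_card (α := Fin n), Fintype.card_fin,
    Nat.card_fun, Nat.card_eq_fintype_card (α := Fin n), Fintype.card_fin] at h2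
  rw [h1]
  apply Nat.eq_of_mul_eq_mul_right (show 0 < n by omega)
  rw [h2, ← pow_succ, show n - 1 + 1 = n by omega]
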